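/- In any r-colouring of the edges of the complete bipartite graph K_{m,n}, there is a monochromatic connected subgraph (a component of one of the colour classes) of order at least (m+n)/r. -/

import Mathlib

def bipColor (m n r : ℕ) (f : Sym2 (Fin m ⊕ Fin n) → Fin r) (i : Fin r) :
    SimpleGraph (Fin m ⊕ Fin n) where
  Adj a b := (completeBipartiteGraph (Fin m) (Fin n)).Adj a b ∧ f s(a, b) = i
  symm := ⟨fun a b h => ⟨(completeBipartiteGraph (Fin m) (Fin n)).symm.symm a b h.1,
    by rw [Sym2.eq_swap]; exact h.2⟩⟩
  loopless := ⟨fun a h => (completeBipartiteGraph (Fin m) (Fin n)).loopless.irrefl a h.1⟩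

section Aux

variable {m n : ℕ}

open Finset

open scoped Classical in
/-- number of left vertices in component `K` -/
noncomputable def lkn (G : SimpleGraph (Fin m ⊕ Fin n)) (K : G.ConnectedComponent) : ℕ :=
  (Finset.univ.filter (fun a : Fin m => G.connectedComponentMk (Sum.inl a) = K)).card

open scoped Classical in
/-- number of right vertices in component `K` -/
noncomputable def rkn (G : SimpleGraph (Fin m ⊕ Fin n)) (K : G.ConnectedComponent) : ℕ :=
  (Finset.univ.filter (fun b : Fin n => G.connectedComponentMk (Sum.inr b) = K)).card

open scoped Classical in
lemma supp_ncard_eq (G : SimpleGraph (Fin m ⊕ Fin n)) (K : G.ConnectedComponent) :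
    K.supp.ncard = lkn G K + rkn G K := by
  have h : K.supp.toFinset =
      Finset.univ.filter (fun v : Fin m ⊕ Fin n => G.connectedComponentMk v = K) := by
    ext v
    simp [SimpleGraph.ConnectedComponent.mem_supp_iff]
  rw [Set.ncard_eq_toFinset_card', h, lkn, rkn, Finset.card_filter, Finset.card_filter,
    Finset.card_filter, Fintype.sum_sum_type]

open scoped Classical in
lemma sum_left_fiber (G : SimpleGraph (Fin m ⊕ Fin n)) [Fintype G.ConnectedComponent]
    (F : G.ConnectedComponent → ℕ) :
    ∑ a : Fin m, F (G.connectedComponentMk (Sum.inl a))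
      = ∑ K : G.ConnectedComponent, lkn G K * F K := by
  rw [← Finset.sum_fiberwise Finset.univ (fun a : Fin m => G.connectedComponentMk (Sum.inl a))
      (fun a => F (G.connectedComponentMk (Sum.inl a)))]
  refine Finset.sum_congr rfl fun K _ => ?_
  calc ∑ a ∈ Finset.univ.filter (fun a : Fin m => G.connectedComponentMk (Sum.inl a) = K),
        F (G.connectedComponentMk (Sum.inl a))
      = ∑ a ∈ Finset.univ.filter (fun a : Fin m => G.connectedComponentMk (Sum.inl a) = K),
        F K := Finset.sum_congr rfl (fun a ha => by rw [(Finset.mem_filter.mp ha).2])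
    _ = lkn G K * F K := by rw [Finset.sum_const, lkn, smul_eq_mul]

open scoped Classical in
lemma sum_right_fiber (G : SimpleGraph (Fin m ⊕ Fin n)) [Fintype G.ConnectedComponent]
    (F : G.ConnectedComponent → ℕ) :
    ∑ b : Fin n, F (G.connectedComponentMk (Sum.inr b))
      = ∑ K : G.ConnectedComponent, rkn G K * F K := by
  rw [← Finset.sum_fiberwise Finset.univ (fun b : Fin n => G.connectedComponentMk (Sum.inr b))
      (fun b => F (G.connectedComponentMk (Sum.inr b)))]
  refine Finset.sum_congr rfl fun K _ => ?_
  calc ∑ b ∈ Finset.univ.filter (fun b : Fin n => G.connectedComponentMk (Sum.inr b) = K),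
        F (G.connectedComponentMk (Sum.inr b))
      = ∑ b ∈ Finset.univ.filter (fun b : Fin n => G.connectedComponentMk (Sum.inr b) = K),
        F K := Finset.sum_congr rfl (fun b hb => by rw [(Finset.mem_filter.mp hb).2])
    _ = rkn G K * F K := by rw [Finset.sum_const, rkn, smul_eq_mul]

lemma nat_amgm (a b : ℕ) : 2 * (a * b) ≤ a ^ 2 + b ^ 2 := by
  zify
  nlinarith [sq_nonneg ((a : ℤ) - b)]

/-- the pointwise Cauchy-Schwarz/AM-GM step, per colour. -/
lemma per_colour (G : SimpleGraph (Fin m ⊕ Fin n)) :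
    2 * (m * n) * (∑ a : Fin m, rkn G (G.connectedComponentMk (Sum.inl a)))
      ≤ n ^ 2 * (∑ a : Fin m, lkn G (G.connectedComponentMk (Sum.inl a)))
        + m ^ 2 * (∑ b : Fin n, rkn G (G.connectedComponentMk (Sum.inr b))) := by
  classical
  haveI : Fintype G.ConnectedComponent := Fintype.ofFinite _
  rw [sum_left_fiber G (rkn G), sum_left_fiber G (lkn G), sum_right_fiber G (rkn G),
    Finset.mul_sum, Finset.mul_sum, Finset.mul_sum, ← Finset.sum_add_distrib]
  refine Finset.sum_le_sum fun K _ => ?_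
  have h := nat_amgm (n * lkn G K) (m * rkn G K)
  nlinarith [h]

open scoped Classical in
lemma cover_right {r : ℕ} (f : Sym2 (Fin m ⊕ Fin n) → Fin r) (a : Fin m) :
    n ≤ ∑ i : Fin r,
      rkn (bipColor m n r f i) ((bipColor m n r f i).connectedComponentMk (Sum.inl a)) := by
  have hsub : (Finset.univ : Finset (Fin n)) ⊆ Finset.univ.biUnion (fun i : Fin r =>
      Finset.univ.filter (fun b : Fin n =>
        (bipColor m n r f i).connectedComponentMk (Sum.inr b)
          = (bipColor m n r f i).connectedComponentMk (Sum.inl a))) := by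
    intro b _
    refine Finset.mem_biUnion.mpr ⟨f s(Sum.inl a, Sum.inr b), Finset.mem_univ _, ?_⟩
    refine Finset.mem_filter.mpr ⟨Finset.mem_univ _, ?_⟩
    refine SimpleGraph.ConnectedComponent.sound ?_
    have hadj : (bipColor m n r f (f s(Sum.inl a, Sum.inr b))).Adj (Sum.inl a) (Sum.inr b) :=
      ⟨by simp, rfl⟩
    exact hadj.symm.reachable
  calc n = (Finset.univ : Finset (Fin n)).card := by simp
    _ ≤ _ := Finset.card_le_card hsub
    _ ≤ _ := Finset.card_biUnion_le

open scoped Classical in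
lemma cover_left {r : ℕ} (f : Sym2 (Fin m ⊕ Fin n) → Fin r) (b : Fin n) :
    m ≤ ∑ i : Fin r,
      lkn (bipColor m n r f i) ((bipColor m n r f i).connectedComponentMk (Sum.inr b)) := by
  have hsub : (Finset.univ : Finset (Fin m)) ⊆ Finset.univ.biUnion (fun i : Fin r =>
      Finset.univ.filter (fun a : Fin m =>
        (bipColor m n r f i).connectedComponentMk (Sum.inl a)
          = (bipColor m n r f i).connectedComponentMk (Sum.inr b))) := by
    intro a _
    refine Finset.mem_biUnion.mpr ⟨f s(Sum.inl a, Sum.inr b), Finset.mem_univ _, ?_⟩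
    refine Finset.mem_filter.mpr ⟨Finset.mem_univ _, ?_⟩
    refine SimpleGraph.ConnectedComponent.sound ?_
    have hadj : (bipColor m n r f (f s(Sum.inl a, Sum.inr b))).Adj (Sum.inl a) (Sum.inr b) :=
      ⟨by simp, rfl⟩
    exact hadj.reachable
  calc m = (Finset.univ : Finset (Fin m)).card := by simp
    _ ≤ _ := Finset.card_le_card hsub
    _ ≤ _ := Finset.card_biUnion_le

end Aux

theorem stmt6 (m n r : ℕ) (hm : 0 < m) (hn : 0 < n) (hr : 0 < r)
    (f : Sym2 (Fin m ⊕ Fin n) → Fin r) :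
    ∃ (i : Fin r) (K : (bipColor m n r f i).ConnectedComponent),
      ((m : ℝ) + n) / r ≤ (K.supp.ncard : ℝ) := by
  classical
  by_contra hcon
  push_neg at hcon
  -- hcon : ∀ i K, (K.supp.ncard : ℝ) < (m + n) / r
  have hkey : ∀ (i : Fin r) (K : (bipColor m n r f i).ConnectedComponent),
      r * (lkn (bipColor m n r f i) K + rkn (bipColor m n r f i) K) + 1 ≤ m + n := by
    intro i K
    have h := hcon i K
    rw [lt_div_iff₀ (by exact_mod_cast hr : (0:ℝ) < r)] at h
    have h2 : K.supp.ncard * r < m + n := by exact_mod_cast h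
    rw [supp_ncard_eq, Nat.mul_comm] at h2
    omega
  -- per-left-vertex bound on the sum of left-part sizes
  have hleft : ∀ a : Fin m, (∑ i : Fin r,
      lkn (bipColor m n r f i) ((bipColor m n r f i).connectedComponentMk (Sum.inl a))) + 1 ≤ m := by
    intro a
    set SL := ∑ i : Fin r,
      lkn (bipColor m n r f i) ((bipColor m n r f i).connectedComponentMk (Sum.inl a)) with hSL
    set SR := ∑ i : Fin r,
      rkn (bipColor m n r f i) ((bipColor m n r f i).connectedComponentMk (Sum.inl a)) with hSR
    have hcov : n ≤ SR := cover_right f a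
    have hsum : r * (SL + SR) + r ≤ r * (m + n) := by
      have := Finset.sum_le_sum (fun i (_ : i ∈ (Finset.univ : Finset (Fin r))) =>
        hkey i ((bipColor m n r f i).connectedComponentMk (Sum.inl a)))
      simpa [Finset.sum_add_distrib, Finset.mul_sum, mul_add, hSL, hSR,
        Finset.sum_const, Finset.card_univ, mul_comm] using this
    have hmul : r * (SL + n + 1) ≤ r * (m + n) := by
      calc r * (SL + n + 1) ≤ r * (SL + SR) + r := by
            have : SL + n ≤ SL + SR := by omega
            calc r * (SL + n + 1) = r * (SL + n) + r := by ring
              _ ≤ r * (SL + SR) + r := by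
                  exact Nat.add_le_add_right (Nat.mul_le_mul_left r this) r
        _ ≤ r * (m + n) := hsum
    have := Nat.le_of_mul_le_mul_left hmul hr
    omega
  have hright : ∀ b : Fin n, (∑ i : Fin r,
      rkn (bipColor m n r f i) ((bipColor m n r f i).connectedComponentMk (Sum.inr b))) + 1 ≤ n := by
    intro b
    set SL := ∑ i : Fin r,
      lkn (bipColor m n r f i) ((bipColor m n r f i).connectedComponentMk (Sum.inr b)) with hSL
    set SR := ∑ i : Fin r,
      rkn (bipColor m n r f i) ((bipColor m n r f i).connectedComponentMk (Sum.inr b)) with hSR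
    have hcov : m ≤ SL := cover_left f b
    have hsum : r * (SL + SR) + r ≤ r * (m + n) := by
      have := Finset.sum_le_sum (fun i (_ : i ∈ (Finset.univ : Finset (Fin r))) =>
        hkey i ((bipColor m n r f i).connectedComponentMk (Sum.inr b)))
      simpa [Finset.sum_add_distrib, Finset.mul_sum, mul_add, hSL, hSR,
        Finset.sum_const, Finset.card_univ, mul_comm] using this
    have hmul : r * (SR + m + 1) ≤ r * (m + n) := by
      calc r * (SR + m + 1) = r * (SR + m) + r := by ring
        _ ≤ r * (SL + SR) + r := by
            have : SR + m ≤ SL + SR := by omega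
            exact Nat.add_le_add_right (Nat.mul_le_mul_left r this) r
        _ ≤ r * (m + n) := hsum
    have := Nat.le_of_mul_le_mul_left hmul hr
    omega
  -- total sums
  set Atot := ∑ i : Fin r, ∑ a : Fin m,
    lkn (bipColor m n r f i) ((bipColor m n r f i).connectedComponentMk (Sum.inl a)) with hAtot
  set Btot := ∑ i : Fin r, ∑ b : Fin n,
    rkn (bipColor m n r f i) ((bipColor m n r f i).connectedComponentMk (Sum.inr b)) with hBtot
  set Stot := ∑ i : Fin r, ∑ a : Fin m,
    rkn (bipColor m n r f i) ((bipColor m n r f i).connectedComponentMk (Sum.inl a)) with hStot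
  have hA : Atot + m ≤ m * m := by
    have h1 : ∑ a : Fin m, ((∑ i : Fin r,
        lkn (bipColor m n r f i) ((bipColor m n r f i).connectedComponentMk (Sum.inl a))) + 1)
        ≤ ∑ _a : Fin m, m := Finset.sum_le_sum (fun a _ => hleft a)
    rw [Finset.sum_add_distrib, Finset.sum_const, Finset.sum_const, Finset.card_univ,
      Fintype.card_fin, smul_eq_mul, mul_one, smul_eq_mul] at h1
    rw [hAtot, Finset.sum_comm]
    exact h1
  have hB : Btot + n ≤ n * n := by
    have h1 : ∑ b : Fin n, ((∑ i : Fin r,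
        rkn (bipColor m n r f i) ((bipColor m n r f i).connectedComponentMk (Sum.inr b))) + 1)
        ≤ ∑ _b : Fin n, n := Finset.sum_le_sum (fun b _ => hright b)
    rw [Finset.sum_add_distrib, Finset.sum_const, Finset.sum_const, Finset.card_univ,
      Fintype.card_fin, smul_eq_mul, mul_one, smul_eq_mul] at h1
    rw [hBtot, Finset.sum_comm]
    exact h1
  have hS : m * n ≤ Stot := by
    have h1 : ∑ a : Fin m, (n : ℕ) ≤ ∑ a : Fin m, ∑ i : Fin r,
        rkn (bipColor m n r f i) ((bipColor m n r f i).connectedComponentMk (Sum.inl a)) :=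
      Finset.sum_le_sum (fun a _ => cover_right f a)
    calc m * n = ∑ _a : Fin m, (n : ℕ) := by
          rw [Finset.sum_const, Finset.card_univ, Fintype.card_fin, smul_eq_mul]
      _ ≤ _ := h1
      _ = Stot := by rw [hStot]; exact Finset.sum_comm
  have hmain : 2 * (m * n) * Stot ≤ n ^ 2 * Atot + m ^ 2 * Btot := by
    rw [hAtot, hBtot, hStot, Finset.mul_sum, Finset.mul_sum, Finset.mul_sum,
      ← Finset.sum_add_distrib]
    exact Finset.sum_le_sum (fun i _ => per_colour (bipColor m n r f i))
  nlinarith [hA, hB, hS, hmain, hm, hn, Nat.mul_le_mul_left (2 * (m * n)) hS]
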